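/- arXiv:2111.11061 — 3 statements merged into one kernel-verified Lean document; each statement's English description precedes it below -/
import Mathlib

section
/- Let N ≥ 1 and let M be an N×N Hermitian positive semidefinite complex matrix, with Ω(s) = (1/N)·Tr[(M + s·I)⁻¹] for s > 0 and φ(v) = 1/Ω(1/v) − 1/v for v > 0. Then φ is differentiable on (0, ∞), and for all 0 < v₀ < v₁ one has ∫_{v₀}^{v₁} Ω(1/v)·φ′(v) dv = log Ω(1/v₀) − log Ω(1/v₁) + (1/N)·( log det(M + (1/v₀)·I) − log det(M + (1/v₁)·I) ). -/
open Matrix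
open scoped ComplexOrder

lemma key {N : ℕ} (M : Matrix (Fin N) (Fin N) ℂ) (hM : M.PosSemidef) (s : ℝ) (hs : 0 < s) :
    (((M + (s:ℂ) • 1)⁻¹).trace).re = ∑ i, (hM.1.eigenvalues i + s)⁻¹ ∧
    ((M + (s:ℂ) • 1).det).re = ∏ i, (hM.1.eigenvalues i + s) := by
  set l := hM.1.eigenvalues with hl
  set U : Matrix (Fin N) (Fin N) ℂ := (hM.1.eigenvectorUnitary : Matrix (Fin N) (Fin N) ℂ) with hUdef
  have hU1 : U * star U = 1 := Matrix.mem_unitaryGroup_iff.mp (hM.1.eigenvectorUnitary).2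
  have hU2 : star U * U = 1 := Matrix.mem_unitaryGroup_iff'.mp (hM.1.eigenvectorUnitary).2
  have hsplit : M + (s:ℂ) • 1 = U * diagonal (fun i => (l i : ℂ) + s) * star U := by
    have h1 : (s:ℂ) • (1 : Matrix (Fin N) (Fin N) ℂ) = U * ((s:ℂ) • 1) * star U := by
      rw [mul_smul_comm, mul_one, smul_mul_assoc, hU1]
    calc M + (s:ℂ) • 1
        = U * diagonal (RCLike.ofReal ∘ l) * star U + U * ((s:ℂ) • 1) * star U := by
          rw [← h1]; congr 1; exact hM.1.spectral_theorem.trans rfl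
      _ = U * (diagonal (RCLike.ofReal ∘ l) + (s:ℂ) • 1) * star U := by
          rw [mul_add, add_mul]
      _ = U * diagonal (fun i => (l i : ℂ) + s) * star U := by
          rw [smul_one_eq_diagonal, diagonal_add]
          rfl
  have hnz : ∀ i, (l i : ℂ) + s ≠ 0 := by
    intro i
    have := hM.eigenvalues_nonneg i
    rw [← Complex.ofReal_add]
    exact_mod_cast (by positivity : (l i + s : ℝ) ≠ 0)
  constructor
  · have hinv : (M + (s:ℂ) • 1)⁻¹ = U * diagonal (fun i => ((l i : ℂ) + s)⁻¹) * star U := by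
      rw [hsplit, Matrix.mul_inv_rev, Matrix.mul_inv_rev]
      rw [Matrix.inv_eq_left_inv hU1, Matrix.inv_eq_left_inv hU2,
        Matrix.inv_eq_left_inv (B := diagonal (fun i => ((l i : ℂ) + s)⁻¹)) (by
          rw [diagonal_mul_diagonal]
          convert diagonal_one using 2
          funext i
          exact inv_mul_cancel₀ (hnz i)), mul_assoc]
    rw [hinv, trace_mul_cycle, hU2, one_mul, trace_diagonal, Complex.re_sum]
    refine Finset.sum_congr rfl fun i _ => ?_
    rw [← Complex.ofReal_add, ← Complex.ofReal_inv, Complex.ofReal_re]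
  · rw [hsplit, det_mul, det_mul, mul_comm, ← mul_assoc, ← det_mul, hU2, det_one, one_mul,
      det_diagonal]
    have : (∏ x : Fin N, ((l x : ℂ) + s)) = ((∏ x : Fin N, (l x + s) : ℝ) : ℂ) := by
      push_cast; rfl
    rw [this, Complex.ofReal_re]

/-- with `Ω(s) = (1/N)·Tr[(M + s·I)⁻¹]` and `φ(v) = 1/Ω(1/v) − 1/v`, `φ` is
differentiable on `(0, ∞)` and for `0 < v₀ < v₁`,
`∫_{v₀}^{v₁} Ω(1/v)·φ′(v) dv = log Ω(1/v₀) − log Ω(1/v₁)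
  + (1/N)(log det(M + v₀⁻¹ I) − log det(M + v₁⁻¹ I))`
(steps (c)–(f) of Appendix A's proof of Theorem 3). -/
theorem stmt_3 {N : ℕ} (hN : 1 ≤ N) (M : Matrix (Fin N) (Fin N) ℂ)
    (hM : M.PosSemidef)
    (Ω φ : ℝ → ℝ)
    (hΩ : ∀ s : ℝ, 0 < s →
      Ω s = (1 / (N : ℝ)) * (((M + (s : ℂ) • (1 : Matrix (Fin N) (Fin N) ℂ))⁻¹).trace).re)
    (hφ : ∀ v : ℝ, 0 < v → φ v = 1 / Ω (1 / v) - 1 / v)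
    (v₀ v₁ : ℝ) (hv₀ : 0 < v₀) (hv₀₁ : v₀ < v₁) :
    (∀ v : ℝ, 0 < v → DifferentiableAt ℝ φ v) ∧
    ∫ v in v₀..v₁, Ω (1 / v) * deriv φ v
      = Real.log (Ω (1 / v₀)) - Real.log (Ω (1 / v₁))
        + (1 / (N : ℝ)) *
          (Real.log (((M + ((1 / v₀ : ℝ) : ℂ) • (1 : Matrix (Fin N) (Fin N) ℂ)).det).re)
            - Real.log (((M + ((1 / v₁ : ℝ) : ℂ) • (1 : Matrix (Fin N) (Fin N) ℂ)).det).re)) := by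
  have hNe : Nonempty (Fin N) := ⟨⟨0, hN⟩⟩
  have hN0 : (N : ℝ) ≠ 0 := by positivity
  set l : Fin N → ℝ := hM.1.eigenvalues with hl
  have hlam : ∀ i, 0 ≤ l i := hM.eigenvalues_nonneg
  set g : ℝ → ℝ := fun v => ∑ i, (l i + v⁻¹)⁻¹ with hg_def
  set D : ℝ → ℝ := fun v => ∑ i, -(-(v ^ 2)⁻¹) / (l i + v⁻¹) ^ 2 with hD_def
  -- basic positivity facts
  have hterm : ∀ v : ℝ, 0 < v → ∀ i, 0 < l i + v⁻¹ := by
    intro v hv i; have := hlam i; positivity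
  have hgpos : ∀ v : ℝ, 0 < v → 0 < g v := by
    intro v hv
    exact Finset.sum_pos (fun i _ => by have := hterm v hv i; positivity) Finset.univ_nonempty
  -- Ω in terms of g
  have hΩg : ∀ v : ℝ, 0 < v → Ω (1 / v) = (1 / N) * g v := by
    intro v hv
    rw [hΩ (1 / v) (by positivity), (key M hM (1 / v) (by positivity)).1]
    simp [hg_def, one_div]
    left; rfl
  -- φ in terms of g near any v > 0
  have hφg : ∀ v : ℝ, 0 < v → φ v = N / g v - v⁻¹ := by
    intro v hv
    rw [hφ v hv, hΩg v hv, one_div]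
    have h := (hgpos v hv).ne'
    field_simp
  -- derivative of g
  have hg' : ∀ v : ℝ, 0 < v → HasDerivAt g (D v) v := by
    intro v hv
    apply HasDerivAt.fun_sum
    intro i _
    exact ((hasDerivAt_inv hv.ne').const_add (l i)).inv (hterm v hv i).ne'
  -- derivative of φ
  set P : ℝ → ℝ := fun v => (0 * g v - (N : ℝ) * D v) / g v ^ 2 - -(v ^ 2)⁻¹ with hP_def
  have hφ' : ∀ v : ℝ, 0 < v → HasDerivAt φ (P v) v := by
    intro v hv
    have hnice : HasDerivAt (fun w => (N : ℝ) / g w - w⁻¹) (P v) v :=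
      ((hasDerivAt_const v (N : ℝ)).div (hg' v hv) (hgpos v hv).ne').sub (hasDerivAt_inv hv.ne')
    apply hnice.congr_of_eventuallyEq
    filter_upwards [Ioi_mem_nhds hv] with w hw
    exact hφg w hw
  refine ⟨fun v hv => (hφ' v hv).differentiableAt, ?_⟩
  -- antiderivative F
  set F : ℝ → ℝ := fun v => -Real.log ((1 / N) * g v) - (1 / N) * ∑ i, Real.log (l i + v⁻¹)
    with hF_def
  have hF' : ∀ v : ℝ, 0 < v → HasDerivAt F (Ω (1 / v) * deriv φ v) v := by
    intro v hv
    have h1 : HasDerivAt (fun w => Real.log ((1 / N) * g w)) ((1 / N * D v) / (1 / N * g v)) v :=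
      HasDerivAt.log ((hg' v hv).const_mul ((1:ℝ) / N))
        (by have := hgpos v hv; positivity)
    have h2 : HasDerivAt (fun w => ∑ i, Real.log (l i + w⁻¹))
        (∑ i, -(v ^ 2)⁻¹ / (l i + v⁻¹)) v := by
      apply HasDerivAt.fun_sum
      intro i _
      exact HasDerivAt.log ((hasDerivAt_inv hv.ne').const_add (l i)) (hterm v hv i).ne'
    have hsum : (∑ i, -(v ^ 2)⁻¹ / (l i + v⁻¹)) = -(v ^ 2)⁻¹ * g v := by
      rw [hg_def, Finset.mul_sum]
      exact Finset.sum_congr rfl fun i _ => div_eq_mul_inv _ _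
    have hD2 : HasDerivAt F (-((1 / N * D v) / (1 / N * g v)) - 1 / N * (-(v ^ 2)⁻¹ * g v)) v := by
      have := (h1.neg).sub (h2.const_mul ((1:ℝ) / N))
      rw [hsum] at this
      exact this
    convert hD2 using 1
    rw [(hφ' v hv).deriv, hΩg v hv, hP_def]
    have hgne := (hgpos v hv).ne'
    have hvne := hv.ne'
    field_simp
    ring
  -- the nice integrand
  set G : ℝ → ℝ := fun v => (1 / N * g v) * P v with hG_def
  have hIcc : Set.uIcc v₀ v₁ = Set.Icc v₀ v₁ := Set.uIcc_of_le hv₀₁.le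
  have hmem : ∀ v ∈ Set.uIcc v₀ v₁, 0 < v := by
    intro v hvm
    rw [hIcc] at hvm
    exact lt_of_lt_of_le hv₀ hvm.1
  have hfG : ∀ v ∈ Set.uIcc v₀ v₁, Ω (1 / v) * deriv φ v = G v := by
    intro v hvm
    rw [(hφ' v (hmem v hvm)).deriv, hΩg v (hmem v hvm), hG_def]
  have hcontG : ContinuousOn G (Set.uIcc v₀ v₁) := by
    have hvne : ∀ v ∈ Set.uIcc v₀ v₁, v ≠ 0 := fun v hvm => (hmem v hvm).ne'
    have hinv : ContinuousOn (fun v : ℝ => v⁻¹) (Set.uIcc v₀ v₁) :=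
      continuousOn_id.inv₀ hvne
    have hterm' : ∀ v ∈ Set.uIcc v₀ v₁, ∀ i, l i + v⁻¹ ≠ 0 :=
      fun v hvm i => (hterm v (hmem v hvm) i).ne'
    have hcg : ContinuousOn g (Set.uIcc v₀ v₁) := by
      apply continuousOn_finset_sum
      intro i _
      exact (continuousOn_const.add hinv).inv₀ fun v hvm => hterm' v hvm i
    have hcD : ContinuousOn D (Set.uIcc v₀ v₁) := by
      apply continuousOn_finset_sum
      intro i _
      exact (((continuous_pow 2).continuousOn.inv₀
        (fun v hvm => pow_ne_zero 2 (hvne v hvm))).neg.neg).div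
        ((continuousOn_const.add hinv).pow 2)
        (fun v hvm => pow_ne_zero 2 (hterm' v hvm i))
    have hcP : ContinuousOn P (Set.uIcc v₀ v₁) := by
      apply ContinuousOn.sub
      · exact ((continuousOn_const.mul hcg).sub (continuousOn_const.mul hcD)).div (hcg.pow 2)
          (fun v hvm => pow_ne_zero 2 (hgpos v (hmem v hvm)).ne')
      · exact ((continuousOn_id.pow 2).inv₀ (fun v hvm => pow_ne_zero 2 (hvne v hvm))).neg
    exact (continuousOn_const.mul hcg).mul hcP
  have hint : ∫ v in v₀..v₁, Ω (1 / v) * deriv φ v = F v₁ - F v₀ := by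
    rw [intervalIntegral.integral_congr hfG]
    exact intervalIntegral.integral_eq_sub_of_hasDerivAt
      (fun v hvm => by rw [← hfG v hvm]; exact hF' v (hmem v hvm))
      (hcontG.intervalIntegrable) |>.trans rfl
  rw [hint]
  -- now compute F v₁ - F v₀
  have hv₁ : 0 < v₁ := hv₀.trans hv₀₁
  have hdet : ∀ v : ℝ, 0 < v →
      Real.log (((M + ((1 / v : ℝ) : ℂ) • (1 : Matrix (Fin N) (Fin N) ℂ)).det).re)
        = ∑ i, Real.log (l i + v⁻¹) := by
    intro v hv
    rw [(key M hM (1 / v) (by positivity)).2]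
    rw [Real.log_prod (fun i _ => by have := hterm v hv i; rw [one_div]; exact this.ne')]
    simp [one_div]
    rfl
  rw [hdet v₀ hv₀, hdet v₁ hv₁, hΩg v₀ hv₀, hΩg v₁ hv₁, hF_def]
  ring
end

section
/- Let N ≥ 1 and let M be an N×N Hermitian positive semidefinite complex matrix, with Ω(s) = (1/N)·Tr[(M + s·I)⁻¹] for s > 0. Then the function g(s) = 1/Ω(s) − s is nondecreasing on (0, ∞); moreover, if M has at least two distinct eigenvalues, g is strictly increasing on (0, ∞). Equivalently, the transfer function φ(v) = 1/Ω(1/v) − 1/v is nonincreasing in v > 0, and strictly decreasing when M has at least two distinct eigenvalues. -/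
open Matrix
open scoped ComplexOrder

private theorem cheb_id' {n : ℕ} (f g : Fin n → ℝ) :
    ∑ i, ∑ j, (f i - f j) * (g i - g j)
      = 2 * ((n : ℝ) * ∑ i, f i * g i - (∑ i, f i) * (∑ i, g i)) := by
  have h : ∀ i j : Fin n, (f i - f j) * (g i - g j)
      = f i * g i - f i * g j - f j * g i + f j * g j := fun i j => by ring
  simp_rw [h]
  simp_rw [Finset.sum_add_distrib, Finset.sum_sub_distrib, ← Finset.mul_sum,
    ← Finset.sum_mul, Finset.sum_const, Finset.card_univ, Fintype.card_fin, nsmul_eq_mul]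
  have e1 : ∑ x : Fin n, f x * ((n : ℝ) * g x) = (n : ℝ) * ∑ x, f x * g x := by
    rw [Finset.mul_sum]; exact Finset.sum_congr rfl fun x _ => by ring
  have e2 : ∑ x : Fin n, (∑ i, f i) * g x = (∑ i, f i) * ∑ i, g i := by
    rw [Finset.mul_sum]
  rw [e1, e2]; ring

private theorem trace_inv_shift' {N : ℕ} (M : Matrix (Fin N) (Fin N) ℂ) (hM : M.PosSemidef)
    (s : ℝ) (hs : 0 < s) :
    (((M + (s : ℂ) • (1 : Matrix (Fin N) (Fin N) ℂ))⁻¹).trace).re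
      = ∑ i, (hM.1.eigenvalues i + s)⁻¹ := by
  set U : Matrix (Fin N) (Fin N) ℂ := (hM.1.eigenvectorUnitary : Matrix (Fin N) (Fin N) ℂ)
  have hU1 : U * star U = 1 := mem_unitaryGroup_iff.mp hM.1.eigenvectorUnitary.2
  have hU2 : star U * U = 1 := mem_unitaryGroup_iff'.mp hM.1.eigenvectorUnitary.2
  set d : Fin N → ℂ := fun i => ((hM.1.eigenvalues i + s : ℝ) : ℂ) with hd
  have hpos : ∀ i, 0 < hM.1.eigenvalues i + s :=
    fun i => add_pos_of_nonneg_of_pos (hM.eigenvalues_nonneg i) hs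
  have hdne : ∀ i, d i ≠ 0 := fun i => by
    simp only [hd, ne_eq, Complex.ofReal_eq_zero]
    exact (hpos i).ne'
  have hMs : M + (s : ℂ) • (1 : Matrix (Fin N) (Fin N) ℂ) = U * diagonal d * star U := by
    rw [hM.1.spectral_theorem, Unitary.conjStarAlgAut_apply]
    rw [show (s : ℂ) • (1 : Matrix (Fin N) (Fin N) ℂ)
        = U * ((s : ℂ) • 1) * star U by
      rw [Matrix.mul_smul, mul_one, Matrix.smul_mul, hU1]]
    rw [← Matrix.add_mul, ← Matrix.mul_add]
    congr 1
    congr 1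
    rw [smul_one_eq_diagonal, diagonal_add]
    congr 1
    funext i
    simp [hd, Function.comp]
  have hinv : (U * diagonal d * star U)⁻¹ = U * diagonal (fun i => (d i)⁻¹) * star U := by
    apply Matrix.inv_eq_left_inv
    calc U * diagonal (fun i => (d i)⁻¹) * star U * (U * diagonal d * star U)
        = U * (diagonal (fun i => (d i)⁻¹) * (star U * U) * diagonal d) * star U := by
          noncomm_ring
      _ = 1 := by
          rw [hU2, mul_one, diagonal_mul_diagonal]
          have : (fun i => (d i)⁻¹ * d i) = fun _ => (1 : ℂ) := by
            funext i; exact inv_mul_cancel₀ (hdne i)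
          rw [this, diagonal_one]
          rw [mul_one, hU1]
  rw [hMs, hinv]
  rw [Matrix.trace_mul_cycle, hU2, Matrix.one_mul, trace_diagonal]
  have : ∀ i : Fin N, (d i)⁻¹ = ((((hM.1.eigenvalues i + s)⁻¹ : ℝ)) : ℂ) := fun i => by
    simp [hd]
  simp_rw [this]
  rw [← Complex.ofReal_sum]
  exact Complex.ofReal_re _

private theorem core' {n : ℕ} (hn : 1 ≤ n) (lam : Fin n → ℝ) (hlam : ∀ i, 0 ≤ lam i)
    (a b : ℝ) (ha : 0 < a) (hab : a < b) :
    ((n : ℝ) / (∑ i, (lam i + a)⁻¹) - a ≤ (n : ℝ) / (∑ i, (lam i + b)⁻¹) - b) ∧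
    ((∃ i j, lam i ≠ lam j) →
      (n : ℝ) / (∑ i, (lam i + a)⁻¹) - a < (n : ℝ) / (∑ i, (lam i + b)⁻¹) - b) := by
  have hb : 0 < b := ha.trans hab
  set f : Fin n → ℝ := fun i => (lam i + a)⁻¹ with hf
  set g : Fin n → ℝ := fun i => (lam i + b)⁻¹ with hgdef
  have hfa : ∀ i, 0 < lam i + a := fun i => add_pos_of_nonneg_of_pos (hlam i) ha
  have hfb : ∀ i, 0 < lam i + b := fun i => add_pos_of_nonneg_of_pos (hlam i) hb
  have hfpos : ∀ i, 0 < f i := fun i => inv_pos.mpr (hfa i)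
  have hgpos : ∀ i, 0 < g i := fun i => inv_pos.mpr (hfb i)
  haveI : NeZero n := ⟨by omega⟩
  have hne : (Finset.univ : Finset (Fin n)).Nonempty := Finset.univ_nonempty
  have hA : 0 < ∑ i, f i := Finset.sum_pos (fun i _ => hfpos i) hne
  have hB : 0 < ∑ i, g i := Finset.sum_pos (fun i _ => hgpos i) hne
  have hP : 0 < ∑ i, f i * g i :=
    Finset.sum_pos (fun i _ => mul_pos (hfpos i) (hgpos i)) hne
  have hAB : (∑ i, f i) - (∑ i, g i) = (b - a) * ∑ i, f i * g i := by
    rw [← Finset.sum_sub_distrib, Finset.mul_sum]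
    refine Finset.sum_congr rfl fun i _ => ?_
    show (lam i + a)⁻¹ - (lam i + b)⁻¹ = (b - a) * ((lam i + a)⁻¹ * (lam i + b)⁻¹)
    rw [inv_sub_inv (hfa i).ne' (hfb i).ne', div_eq_mul_inv, mul_inv]
    ring
  have hterm : ∀ i j, 0 ≤ (f i - f j) * (g i - g j) := by
    intro i j
    rcases le_total (lam i) (lam j) with h | h
    · have hf1 : f j ≤ f i := by
        apply inv_anti₀ (hfa i) (by linarith)
      have hg1 : g j ≤ g i := by
        apply inv_anti₀ (hfb i) (by linarith)
      exact mul_nonneg (by linarith) (by linarith)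
    · have hf1 : f i ≤ f j := by
        apply inv_anti₀ (hfa j) (by linarith)
      have hg1 : g i ≤ g j := by
        apply inv_anti₀ (hfb j) (by linarith)
      nlinarith [mul_nonneg (sub_nonneg.2 hf1) (sub_nonneg.2 hg1)]
  have key : (∑ i, f i) * (∑ i, g i) ≤ (n : ℝ) * ∑ i, f i * g i := by
    have hsum : 0 ≤ ∑ i, ∑ j, (f i - f j) * (g i - g j) :=
      Finset.sum_nonneg fun i _ => Finset.sum_nonneg fun j _ => hterm i j
    rw [cheb_id'] at hsum
    linarith
  constructor
  · have h1 : (b - a) * ((∑ i, f i) * (∑ i, g i)) ≤ (b - a) * ((n : ℝ) * ∑ i, f i * g i) :=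
      mul_le_mul_of_nonneg_left key (by linarith)
    have h2 : b - a ≤ (n : ℝ) / (∑ i, g i) - (n : ℝ) / (∑ i, f i) := by
      rw [div_sub_div _ _ hB.ne' hA.ne', le_div_iff₀ (by positivity)]
      have e2 : (n : ℝ) * (∑ i, f i) - (n : ℝ) * (∑ i, g i)
          = (n : ℝ) * ((b - a) * ∑ i, f i * g i) := by rw [← mul_sub, hAB]
      nlinarith [h1, e2]
    linarith
  · rintro ⟨i0, j0, hij⟩
    have hterm0 : 0 < (f i0 - f j0) * (g i0 - g j0) := by
      rcases hij.lt_or_gt with h | h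
      · have hf1 : f j0 < f i0 := by
          apply inv_strictAnti₀ (hfa i0) (by linarith)
        have hg1 : g j0 < g i0 := by
          apply inv_strictAnti₀ (hfb i0) (by linarith)
        exact mul_pos (by linarith) (by linarith)
      · have hf1 : f i0 < f j0 := by
          apply inv_strictAnti₀ (hfa j0) (by linarith)
        have hg1 : g i0 < g j0 := by
          apply inv_strictAnti₀ (hfb j0) (by linarith)
        exact mul_pos_of_neg_of_neg (by linarith) (by linarith)
    have keys : (∑ i, f i) * (∑ i, g i) < (n : ℝ) * ∑ i, f i * g i := by
      have hsum : 0 < ∑ i, ∑ j, (f i - f j) * (g i - g j) := by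
        refine Finset.sum_pos' (fun i _ => Finset.sum_nonneg fun j _ => hterm i j)
          ⟨i0, Finset.mem_univ _, ?_⟩
        exact Finset.sum_pos' (fun j _ => hterm i0 j) ⟨j0, Finset.mem_univ _, hterm0⟩
      rw [cheb_id'] at hsum
      linarith
    have h1 : (b - a) * ((∑ i, f i) * (∑ i, g i)) < (b - a) * ((n : ℝ) * ∑ i, f i * g i) :=
      mul_lt_mul_of_pos_left keys (by linarith)
    have h2 : b - a < (n : ℝ) / (∑ i, g i) - (n : ℝ) / (∑ i, f i) := by
      rw [div_sub_div _ _ hB.ne' hA.ne', lt_div_iff₀ (by positivity)]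
      have e2 : (n : ℝ) * (∑ i, f i) - (n : ℝ) * (∑ i, g i)
          = (n : ℝ) * ((b - a) * ∑ i, f i * g i) := by rw [← mul_sub, hAB]
      nlinarith [h1, e2]
    linarith

/-- with `Ω(s) = (1/N)·Tr[(M + s·I)⁻¹]`, the function `g(s) = 1/Ω(s) − s`
is nondecreasing on `(0,∞)`, strictly increasing if `M` has at least two distinct
eigenvalues; equivalently `φ(v) = 1/Ω(1/v) − 1/v` is nonincreasing in `v > 0`, strictly
decreasing when `M` has two distinct eigenvalues. -/
theorem stmt_6 {N : ℕ} (hN : 1 ≤ N) (M : Matrix (Fin N) (Fin N) ℂ)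
    (hM : M.PosSemidef)
    (Ω g φ : ℝ → ℝ)
    (hΩ : ∀ s : ℝ, 0 < s →
      Ω s = (1 / (N : ℝ)) * (((M + (s : ℂ) • (1 : Matrix (Fin N) (Fin N) ℂ))⁻¹).trace).re)
    (hg : ∀ s : ℝ, 0 < s → g s = 1 / Ω s - s)
    (hφ : ∀ v : ℝ, 0 < v → φ v = 1 / Ω (1 / v) - 1 / v) :
    MonotoneOn g (Set.Ioi 0) ∧
    ((∃ i j, hM.1.eigenvalues i ≠ hM.1.eigenvalues j) → StrictMonoOn g (Set.Ioi 0)) ∧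
    AntitoneOn φ (Set.Ioi 0) ∧
    ((∃ i j, hM.1.eigenvalues i ≠ hM.1.eigenvalues j) → StrictAntiOn φ (Set.Ioi 0)) := by
  set lam : Fin N → ℝ := hM.1.eigenvalues with hlamdef
  have hlam : ∀ i, 0 ≤ lam i := fun i => hM.eigenvalues_nonneg i
  haveI : NeZero N := ⟨by omega⟩
  have hNpos : (0 : ℝ) < N := by exact_mod_cast Nat.pos_of_ne_zero (by omega)
  have hSpos : ∀ s : ℝ, 0 < s → 0 < ∑ i, (lam i + s)⁻¹ := fun s hs =>
    Finset.sum_pos (fun i _ => inv_pos.mpr (add_pos_of_nonneg_of_pos (hlam i) hs))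
      Finset.univ_nonempty
  have hg' : ∀ s : ℝ, 0 < s → g s = (N : ℝ) / (∑ i, (lam i + s)⁻¹) - s := by
    intro s hs
    rw [hg s hs, hΩ s hs, trace_inv_shift' M hM s hs]
    have hS := hSpos s hs
    congr 1
    field_simp
    rfl
  have key : ∀ x y : ℝ, 0 < x → x < y →
      g x ≤ g y ∧ ((∃ i j, lam i ≠ lam j) → g x < g y) := by
    intro x y hx hxy
    rw [hg' x hx, hg' y (hx.trans hxy)]
    exact core' hN lam hlam x y hx hxy
  have hφ' : ∀ v : ℝ, 0 < v → φ v = g (1 / v) := by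
    intro v hv
    rw [hφ v hv, hg (1 / v) (by positivity)]
  refine ⟨?_, ?_, ?_, ?_⟩
  · intro x hx y hy hxy
    rcases hxy.lt_or_eq with h | h
    · exact (key x y hx h).1
    · exact h ▸ le_refl _
  · intro hdist x hx y hy hxy
    exact (key x y hx hxy).2 hdist
  · intro u hu v hv huv
    simp only [Set.mem_Ioi] at hu hv
    rcases huv.lt_or_eq with h | h
    · rw [hφ' u hu, hφ' v hv]
      exact (key (1 / v) (1 / u) (one_div_pos.mpr hv)
        (one_div_lt_one_div_of_lt hu h)).1
    · exact h ▸ le_refl _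
  · intro hdist u hu v hv huv
    simp only [Set.mem_Ioi] at hu hv
    rw [hφ' u hu, hφ' v hv]
    exact (key (1 / v) (1 / u) (one_div_pos.mpr hv)
      (one_div_lt_one_div_of_lt hu huv)).2 hdist
end

section
/- Let N ≥ 1 and let M be an N×N Hermitian positive semidefinite complex matrix having at least two distinct eigenvalues. Define Ω(s) = (1/N)·Tr[(M + s·I)⁻¹] for s > 0 and φ(v) = 1/Ω(1/v) − 1/v for v > 0, so that φ is strictly decreasing with lim_{v→0⁺} φ(v) = Tr(M)/N; let φ⁻¹ denote the inverse of φ on its range. Then for every v* > 0, setting ρ* = φ(v*) and snr₀ = Tr(M)/N, the improper integral ∫_{ρ*}^{snr₀} ( ρ + 1/φ⁻¹(ρ) )⁻¹ dρ converges and equals log Ω(1/v*) + (1/N)·log det((1/v*)·I + M). -/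
open Matrix Filter MeasureTheory
open scoped ComplexOrder

variable {N : ℕ}

lemma conj_unitary_trace (U : Matrix.unitaryGroup (Fin N) ℂ) (D : Matrix (Fin N) (Fin N) ℂ) :
    ((U : Matrix (Fin N) (Fin N) ℂ) * D * star (U : Matrix (Fin N) (Fin N) ℂ)).trace = D.trace := by
  rw [Matrix.trace_mul_cycle, Unitary.coe_star_mul_self, Matrix.one_mul]

lemma inv_conj_unitary (U : Matrix.unitaryGroup (Fin N) ℂ) (d : Fin N → ℂ)
    (hd : ∀ i, d i ≠ 0) :
    ((U : Matrix (Fin N) (Fin N) ℂ) * Matrix.diagonal d * star (U : Matrix (Fin N) (Fin N) ℂ))⁻¹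
      = (U : Matrix (Fin N) (Fin N) ℂ) * Matrix.diagonal (fun i => (d i)⁻¹)
        * star (U : Matrix (Fin N) (Fin N) ℂ) := by
  apply Matrix.inv_eq_right_inv
  have h1 : (star (U : Matrix (Fin N) (Fin N) ℂ)) * U = 1 := Unitary.coe_star_mul_self U
  have h2 : (U : Matrix (Fin N) (Fin N) ℂ) * star (U : Matrix (Fin N) (Fin N) ℂ) = 1 :=
    Unitary.coe_mul_star_self U
  have h3 : Matrix.diagonal d * Matrix.diagonal (fun i => (d i)⁻¹) = 1 := by
    rw [Matrix.diagonal_mul_diagonal]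
    rw [show (fun i => d i * (d i)⁻¹) = fun _ => (1:ℂ) from funext fun i => mul_inv_cancel₀ (hd i)]
    exact Matrix.diagonal_one
  calc (U : Matrix (Fin N) (Fin N) ℂ) * Matrix.diagonal d * star (U : Matrix (Fin N) (Fin N) ℂ) *
        ((U : Matrix (Fin N) (Fin N) ℂ) * Matrix.diagonal (fun i => (d i)⁻¹)
          * star (U : Matrix (Fin N) (Fin N) ℂ))
      = (U : Matrix (Fin N) (Fin N) ℂ) * (Matrix.diagonal d *
          ((star (U : Matrix (Fin N) (Fin N) ℂ) * U) * Matrix.diagonal (fun i => (d i)⁻¹)))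
          * star (U : Matrix (Fin N) (Fin N) ℂ) := by
        simp only [Matrix.mul_assoc]
    _ = 1 := by rw [h1, Matrix.one_mul, h3, Matrix.mul_one, h2]

lemma decomp_shift (M : Matrix (Fin N) (Fin N) ℂ) (hM : M.IsHermitian) (s : ℝ) :
    (s : ℂ) • (1 : Matrix (Fin N) (Fin N) ℂ) + M
      = (hM.eigenvectorUnitary : Matrix (Fin N) (Fin N) ℂ)
        * Matrix.diagonal (fun i => (s : ℂ) + (hM.eigenvalues i : ℂ))
        * star (hM.eigenvectorUnitary : Matrix (Fin N) (Fin N) ℂ) := by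
  set U := (hM.eigenvectorUnitary : Matrix (Fin N) (Fin N) ℂ)
  have h2 : U * star U = 1 := Unitary.coe_mul_star_self _
  have h1 : (s : ℂ) • (1 : Matrix (Fin N) (Fin N) ℂ)
      = U * ((s : ℂ) • (1 : Matrix (Fin N) (Fin N) ℂ)) * star U := by
    rw [Matrix.mul_smul, Matrix.mul_one, Matrix.smul_mul, h2]
  conv_lhs => rw [hM.spectral_theorem, Unitary.conjStarAlgAut_apply, h1]
  rw [← Matrix.add_mul, ← Matrix.mul_add]
  congr 1
  congr 1
  rw [← Matrix.diagonal_one, ← Matrix.diagonal_smul, Matrix.diagonal_add]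
  congr 1
  funext i
  simp [Function.comp]

lemma trace_inv_re (M : Matrix (Fin N) (Fin N) ℂ) (hM : M.PosSemidef) {s : ℝ} (hs : 0 < s) :
    (((M + (s : ℂ) • (1 : Matrix (Fin N) (Fin N) ℂ))⁻¹).trace).re
      = ∑ i, (hM.1.eigenvalues i + s)⁻¹ := by
  have hd : ∀ i, ((s : ℂ) + (hM.1.eigenvalues i : ℂ)) ≠ 0 := by
    intro i
    have h0 : (0:ℝ) < s + hM.1.eigenvalues i :=
      add_pos_of_pos_of_nonneg hs (hM.eigenvalues_nonneg i)
    intro h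
    rw [show ((s : ℂ) + (hM.1.eigenvalues i : ℂ)) = ((s + hM.1.eigenvalues i : ℝ) : ℂ) by
      push_cast; ring] at h
    exact absurd (Complex.ofReal_eq_zero.mp h) (ne_of_gt h0)
  have hcomm : M + (s : ℂ) • (1 : Matrix (Fin N) (Fin N) ℂ)
      = (s : ℂ) • (1 : Matrix (Fin N) (Fin N) ℂ) + M := add_comm _ _
  rw [hcomm, decomp_shift M hM.1 s, inv_conj_unitary _ _ hd, conj_unitary_trace,
    Matrix.trace_diagonal]
  have : ∀ i, ((s : ℂ) + (hM.1.eigenvalues i : ℂ))⁻¹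
      = (((hM.1.eigenvalues i + s)⁻¹ : ℝ) : ℂ) := by
    intro i
    push_cast
    rw [add_comm]
  rw [Finset.sum_congr rfl (fun i _ => this i)]
  rw [← Complex.ofReal_sum]
  exact Complex.ofReal_re _

lemma det_shift_re (M : Matrix (Fin N) (Fin N) ℂ) (hM : M.PosSemidef) (t : ℝ) :
    ((((t : ℝ) : ℂ) • (1 : Matrix (Fin N) (Fin N) ℂ) + M).det).re
      = ∏ i, (t + hM.1.eigenvalues i) := by
  rw [decomp_shift M hM.1 t]
  set U := (hM.1.eigenvectorUnitary : Matrix (Fin N) (Fin N) ℂ)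
  have h2 : U * star U = 1 := Unitary.coe_mul_star_self _
  rw [Matrix.det_mul, Matrix.det_mul, Matrix.det_diagonal]
  have : U.det * (∏ i, ((t : ℂ) + (hM.1.eigenvalues i : ℂ))) * (star U).det
      = (∏ i, ((t : ℂ) + (hM.1.eigenvalues i : ℂ))) * (U * star U).det := by
    rw [Matrix.det_mul]; ring
  rw [this, h2, Matrix.det_one, mul_one]
  have : ∀ i ∈ Finset.univ, ((t : ℂ) + (hM.1.eigenvalues i : ℂ))
      = (((t + hM.1.eigenvalues i : ℝ)) : ℂ) := by intro i _; push_cast; ring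
  rw [Finset.prod_congr rfl this, ← Complex.ofReal_prod]
  exact Complex.ofReal_re _

lemma trace_re_eq (M : Matrix (Fin N) (Fin N) ℂ) (hM : M.PosSemidef) :
    (M.trace).re = ∑ i, hM.1.eigenvalues i := by
  conv_lhs => rw [hM.1.spectral_theorem, Unitary.conjStarAlgAut_apply]
  rw [conj_unitary_trace, Matrix.trace_diagonal]
  rw [show ∀ (f : Fin N → ℝ), ∑ i, (RCLike.ofReal ∘ f) i = ((∑ i, f i : ℝ) : ℂ) from
    fun f => by push_cast; rfl]
  exact Complex.ofReal_re _
variable {N : ℕ}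

variable {N : ℕ}

lemma cs_identity (l u : Fin N → ℝ) :
    2 * ((∑ i, (l i)^2 * (u i)^2) * (∑ i, u i)
         - (∑ i, l i * u i) * (∑ i, l i * (u i)^2))
      = ∑ i, ∑ j, u i * u j * (l i - l j) * (l i * u i - l j * u j) := by
  have hTP : (∑ i, (l i)^2*(u i)^2) * (∑ i, u i)
      = ∑ i, ∑ j, (l i)^2*(u i)^2 * u j := Finset.sum_mul_sum _ _ _ _
  have hTP' : (∑ i, (l i)^2*(u i)^2) * (∑ i, u i)
      = ∑ i, ∑ j, (l j)^2*(u j)^2 * u i := by rw [hTP]; exact Finset.sum_comm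
  have hSR : (∑ i, l i*u i) * (∑ i, l i*(u i)^2)
      = ∑ i, ∑ j, (l i*u i) * (l j*(u j)^2) := Finset.sum_mul_sum _ _ _ _
  have hSR' : (∑ i, l i*u i) * (∑ i, l i*(u i)^2)
      = ∑ i, ∑ j, (l j*u j) * (l i*(u i)^2) := by rw [hSR]; exact Finset.sum_comm
  have expand : 2 * ((∑ i, (l i)^2 * (u i)^2) * (∑ i, u i)
         - (∑ i, l i * u i) * (∑ i, l i * (u i)^2))
      = (∑ i, ∑ j, (l i)^2*(u i)^2 * u j) + (∑ i, ∑ j, (l j)^2*(u j)^2 * u i)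
        - ((∑ i, ∑ j, (l i*u i) * (l j*(u j)^2)) + (∑ i, ∑ j, (l j*u j) * (l i*(u i)^2))) := by
    rw [← hTP, ← hTP', ← hSR, ← hSR']; ring
  rw [expand]
  simp only [← Finset.sum_add_distrib, ← Finset.sum_sub_distrib]
  apply Finset.sum_congr rfl
  intro i _
  apply Finset.sum_congr rfl
  intro j _
  ring

lemma mono_term' {a b v : ℝ} (ha : 0 ≤ a) (hab : a ≤ b) (hv : 0 ≤ v) :
    a * (a*v+1)⁻¹ ≤ b * (b*v+1)⁻¹ := by
  have h1 : (0:ℝ) < a*v+1 := by nlinarith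
  have h2 : (0:ℝ) < b*v+1 := by nlinarith
  rw [← div_eq_mul_inv, ← div_eq_mul_inv, div_le_div_iff₀ h1 h2]
  nlinarith

lemma mono_term_strict {a b v : ℝ} (ha : 0 ≤ a) (hab : a < b) (hv : 0 ≤ v) :
    a * (a*v+1)⁻¹ < b * (b*v+1)⁻¹ := by
  have h1 : (0:ℝ) < a*v+1 := by nlinarith
  have h2 : (0:ℝ) < b*v+1 := by nlinarith
  rw [← div_eq_mul_inv, ← div_eq_mul_inv, div_lt_div_iff₀ h1 h2]
  nlinarith


noncomputable def Pf (l : Fin N → ℝ) (v : ℝ) : ℝ := ∑ i, (l i * v + 1)⁻¹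
noncomputable def Sf (l : Fin N → ℝ) (v : ℝ) : ℝ := ∑ i, l i * (l i * v + 1)⁻¹
noncomputable def Rf (l : Fin N → ℝ) (v : ℝ) : ℝ := ∑ i, l i * ((l i * v + 1)^2)⁻¹
noncomputable def Tf (l : Fin N → ℝ) (v : ℝ) : ℝ := ∑ i, (l i)^2 * ((l i * v + 1)^2)⁻¹
noncomputable def phi0 (l : Fin N → ℝ) (v : ℝ) : ℝ := Sf l v / Pf l v
noncomputable def Gf (l : Fin N → ℝ) (v : ℝ) : ℝ :=
  Real.log ((1/(N:ℝ)) * Pf l v) + (1/(N:ℝ)) * ∑ i, Real.log (l i * v + 1)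

section lemmas
variable {l : Fin N → ℝ} (hl : ∀ i, 0 ≤ l i)
include hl

lemma den_pos {v : ℝ} (hv : 0 ≤ v) (i : Fin N) : 0 < l i * v + 1 := by
  have := hl i; nlinarith

lemma Pf_pos (hN : 1 ≤ N) {v : ℝ} (hv : 0 ≤ v) : 0 < Pf l v := by
  apply Finset.sum_pos
  · intro i _; exact inv_pos.mpr (den_pos hl hv i)
  · rw [Finset.univ_nonempty_iff]
    exact Fin.pos_iff_nonempty.mp (by omega)

lemma Sf_nonneg {v : ℝ} (hv : 0 ≤ v) : 0 ≤ Sf l v :=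
  Finset.sum_nonneg fun i _ => mul_nonneg (hl i) (inv_nonneg.mpr (den_pos hl hv i).le)

lemma Sf_pos {v : ℝ} (hv : 0 ≤ v) (hex : ∃ i, 0 < l i) : 0 < Sf l v := by
  obtain ⟨i0, hi0⟩ := hex
  apply Finset.sum_pos' (fun i _ => mul_nonneg (hl i) (inv_nonneg.mpr (den_pos hl hv i).le))
  exact ⟨i0, Finset.mem_univ _, mul_pos hi0 (inv_pos.mpr (den_pos hl hv i0))⟩

lemma hasDerivAt_Pf {v : ℝ} (hv : 0 ≤ v) : HasDerivAt (Pf l) (-Rf l v) v := by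
  have h : ∀ i ∈ Finset.univ, HasDerivAt (fun w => (l i * w + 1)⁻¹)
      (-(l i * ((l i * v + 1)^2)⁻¹)) v := by
    intro i _
    have hd : HasDerivAt (fun w => l i * w + 1) (l i) v := by
      simpa using ((hasDerivAt_id v).const_mul (l i)).add_const 1
    have := hd.fun_inv (ne_of_gt (den_pos hl hv i))
    convert! this using 1
    field_simp
  have := HasDerivAt.fun_sum h
  convert! this using 1
  rw [Rf, ← Finset.sum_neg_distrib]

lemma hasDerivAt_Sf {v : ℝ} (hv : 0 ≤ v) : HasDerivAt (Sf l) (-Tf l v) v := by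
  have h : ∀ i ∈ Finset.univ, HasDerivAt (fun w => l i * (l i * w + 1)⁻¹)
      (-((l i)^2 * ((l i * v + 1)^2)⁻¹)) v := by
    intro i _
    have hd : HasDerivAt (fun w => l i * w + 1) (l i) v := by
      simpa using ((hasDerivAt_id v).const_mul (l i)).add_const 1
    have h2 := (hd.fun_inv (ne_of_gt (den_pos hl hv i))).const_mul (l i)
    convert! h2 using 1
    field_simp
  have := HasDerivAt.fun_sum h
  convert! this using 1
  rw [Tf, ← Finset.sum_neg_distrib]

lemma TP_SR_pos {v : ℝ} (hv : 0 ≤ v) {i0 j0 : Fin N} (hne : l i0 ≠ l j0) :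
    0 < Tf l v * Pf l v - Sf l v * Rf l v := by
  set u : Fin N → ℝ := fun i => (l i * v + 1)⁻¹ with hu
  have hupos : ∀ i, 0 < u i := fun i => inv_pos.mpr (den_pos hl hv i)
  have key : Tf l v * Pf l v - Sf l v * Rf l v
      = (∑ i, (l i)^2 * (u i)^2) * (∑ i, u i) - (∑ i, l i * u i) * (∑ i, l i * (u i)^2) := by
    simp only [Tf, Pf, Sf, Rf, hu]
    congr 2 <;> apply Finset.sum_congr rfl <;> intro i _ <;> rw [← inv_pow]
  have hterm : ∀ i j : Fin N, 0 ≤ u i * u j * (l i - l j) * (l i * u i - l j * u j) := by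
    intro i j
    have huu := mul_nonneg (hupos i).le (hupos j).le
    have h2 : 0 ≤ (l i - l j) * (l i * u i - l j * u j) := by
      rcases le_total (l i) (l j) with h | h
      · have ha := sub_nonpos.2 h
        have hb := sub_nonpos.2 (mono_term' (hl i) h hv)
        nlinarith
      · exact mul_nonneg (sub_nonneg.2 h) (sub_nonneg.2 (mono_term' (hl j) h hv))
    calc (0:ℝ) ≤ (u i * u j) * ((l i - l j) * (l i * u i - l j * u j)) := mul_nonneg huu h2
      _ = u i * u j * (l i - l j) * (l i * u i - l j * u j) := by ring
  have hterm0 : 0 < u i0 * u j0 * (l i0 - l j0) * (l i0 * u i0 - l j0 * u j0) := by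
    have huu := mul_pos (hupos i0) (hupos j0)
    have h2 : 0 < (l i0 - l j0) * (l i0 * u i0 - l j0 * u j0) := by
      rcases lt_or_gt_of_ne hne with h | h
      · exact mul_pos_of_neg_of_neg (sub_neg.2 h) (sub_neg.2 (mono_term_strict (hl i0) h hv))
      · exact mul_pos (sub_pos.2 h) (sub_pos.2 (mono_term_strict (hl j0) h hv))
    calc (0:ℝ) < (u i0 * u j0) * ((l i0 - l j0) * (l i0 * u i0 - l j0 * u j0)) := mul_pos huu h2
      _ = u i0 * u j0 * (l i0 - l j0) * (l i0 * u i0 - l j0 * u j0) := by ring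
  have hsum : 0 < ∑ i, ∑ j, u i * u j * (l i - l j) * (l i * u i - l j * u j) := by
    apply Finset.sum_pos'
    · intro i _; exact Finset.sum_nonneg fun j _ => hterm i j
    · refine ⟨i0, Finset.mem_univ _, Finset.sum_pos' (fun j _ => hterm i0 j)
        ⟨j0, Finset.mem_univ _, hterm0⟩⟩
  rw [← cs_identity] at hsum
  nlinarith [key]

lemma hasDerivAt_phi0 (hN : 1 ≤ N) {v : ℝ} (hv : 0 ≤ v) :
    HasDerivAt (phi0 l)
      (-((Tf l v * Pf l v - Sf l v * Rf l v) / (Pf l v)^2)) v := by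
  have h := (hasDerivAt_Sf hl hv).fun_div (hasDerivAt_Pf hl hv) (ne_of_gt (Pf_pos hl hN hv))
  convert! h using 1
  field_simp
  ring

lemma contOn_phi0 (hN : 1 ≤ N) : ContinuousOn (phi0 l) (Set.Ici 0) := by
  intro v hv
  exact ((hasDerivAt_phi0 hl hN hv).continuousAt).continuousWithinAt

lemma strictAntiOn_phi0 (hN : 1 ≤ N) {i0 j0 : Fin N} (hne : l i0 ≠ l j0) :
    StrictAntiOn (phi0 l) (Set.Ici 0) := by
  apply strictAntiOn_of_deriv_neg (convex_Ici 0) (contOn_phi0 hl hN)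
  intro v hv
  rw [interior_Ici] at hv
  rw [(hasDerivAt_phi0 hl hN (le_of_lt hv)).deriv]
  have h1 := TP_SR_pos hl (le_of_lt hv) hne
  have h2 := Pf_pos hl hN (le_of_lt hv)
  have : 0 < (Tf l v * Pf l v - Sf l v * Rf l v) / (Pf l v)^2 := by positivity
  linarith



lemma card_identity {v : ℝ} (hv : 0 ≤ v) : (N:ℝ) = Pf l v + v * Sf l v := by
  have : ∀ i : Fin N, (1:ℝ) = (l i * v + 1)⁻¹ + v * (l i * (l i * v + 1)⁻¹) := by
    intro i
    have h := ne_of_gt (den_pos hl hv i)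
    field_simp
    ring
  calc (N:ℝ) = ∑ _i : Fin N, (1:ℝ) := by simp
    _ = ∑ i, ((l i * v + 1)⁻¹ + v * (l i * (l i * v + 1)⁻¹)) :=
        Finset.sum_congr rfl fun i _ => this i
    _ = Pf l v + v * Sf l v := by
        rw [Finset.sum_add_distrib, ← Finset.mul_sum]; rfl

lemma Rf_identity {v : ℝ} (hv : 0 ≤ v) : Rf l v = Sf l v - v * Tf l v := by
  have : ∀ i : Fin N, l i * ((l i * v + 1)^2)⁻¹
      = l i * (l i * v + 1)⁻¹ - v * ((l i)^2 * ((l i * v + 1)^2)⁻¹) := by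
    intro i
    have h := ne_of_gt (den_pos hl hv i)
    field_simp
    ring
  calc Rf l v = ∑ i, (l i * (l i * v + 1)⁻¹ - v * ((l i)^2 * ((l i * v + 1)^2)⁻¹)) :=
        Finset.sum_congr rfl fun i _ => this i
    _ = Sf l v - v * Tf l v := by
        rw [Finset.sum_sub_distrib, ← Finset.mul_sum]; rfl

lemma hasDerivAt_Gf (hN : 1 ≤ N) {v : ℝ} (hv : 0 ≤ v) :
    HasDerivAt (Gf l) (Sf l v / (N:ℝ) - Rf l v / Pf l v) v := by
  have hNpos : (0:ℝ) < (N:ℝ) := by exact_mod_cast Nat.pos_of_ne_zero (by omega)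
  have hP := Pf_pos hl hN hv
  have h1 : HasDerivAt (fun w => Real.log ((1/(N:ℝ)) * Pf l w))
      (((1/(N:ℝ)) * (-Rf l v)) / ((1/(N:ℝ)) * Pf l v)) v := by
    exact ((hasDerivAt_Pf hl hv).const_mul (1/(N:ℝ))).log (by positivity)
  have h2 : HasDerivAt (fun w => (1/(N:ℝ)) * ∑ i, Real.log (l i * w + 1))
      ((1/(N:ℝ)) * Sf l v) v := by
    have hsum : HasDerivAt (fun w => ∑ i, Real.log (l i * w + 1)) (Sf l v) v := by
      have h : ∀ i ∈ Finset.univ, HasDerivAt (fun w => Real.log (l i * w + 1))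
          (l i * (l i * v + 1)⁻¹) v := by
        intro i _
        have hd : HasDerivAt (fun w => l i * w + 1) (l i) v := by
          simpa using ((hasDerivAt_id v).const_mul (l i)).add_const 1
        have := hd.log (ne_of_gt (den_pos hl hv i))
        convert this using 1
        rw [div_eq_mul_inv]
      exact HasDerivAt.fun_sum h
    exact hsum.const_mul _
  have := h1.fun_add h2
  convert! this using 1
  field_simp
  ring

lemma phi0_lt_snr0 (hN : 1 ≤ N) {i0 j0 : Fin N} (hne : l i0 ≠ l j0) {v : ℝ} (hv : 0 < v) :
    phi0 l v < (∑ i, l i) / (N:ℝ) := by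
  have h := strictAntiOn_phi0 hl hN hne (Set.self_mem_Ici) (Set.mem_Ici.mpr hv.le) hv
  have h0 : phi0 l 0 = (∑ i, l i) / (N:ℝ) := by
    rw [phi0, Sf, Pf]
    simp
  rw [← h0]; exact h

lemma exists_pos_eig {i0 j0 : Fin N} (hne : l i0 ≠ l j0) : ∃ i, 0 < l i := by
  rcases lt_or_gt_of_ne hne with h | h
  · exact ⟨j0, lt_of_le_of_lt (hl i0) h⟩
  · exact ⟨i0, lt_of_le_of_lt (hl j0) h⟩

lemma phi0_pos (hN : 1 ≤ N) {i0 j0 : Fin N} (hne : l i0 ≠ l j0) {v : ℝ} (hv : 0 ≤ v) :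
    0 < phi0 l v :=
  div_pos (Sf_pos hl hv (exists_pos_eig hl hne)) (Pf_pos hl hN hv)
lemma phi0_eq_of_pos (hN : 1 ≤ N) {v : ℝ} (hv : 0 < v) :
    1/((1/(N:ℝ)) * (v * Pf l v)) - 1/v = phi0 l v := by
  have hNpos : (0:ℝ) < (N:ℝ) := by exact_mod_cast Nat.pos_of_ne_zero (by omega)
  have hP := Pf_pos hl hN hv.le
  have hId := card_identity hl (v := v) hv.le
  rw [phi0]
  field_simp
  linear_combination hId

omit hl in
lemma abstract_identity (S P T v : ℝ) (hP : P ≠ 0) (hv : v ≠ 0) (hPS : P + v*S ≠ 0)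
    (hD : T*P - S*(S - v*T) ≠ 0) :
    -((S/(P + v*S) - (S - v*T)/P) * (-((T*P - S*(S - v*T))/P^2))⁻¹)
      = (S/P + 1/v)⁻¹ := by
  have e1 : (-((T*P - S*(S - v*T))/P^2))⁻¹ = -(P^2/(T*P - S*(S - v*T))) := by
    rw [inv_neg, inv_div]
  rw [e1, mul_neg, neg_neg]
  have e2 : S/P + 1/v = (P + v*S)/(v*P) := by
    field_simp
    ring
  rw [e2, inv_div, div_sub_div _ _ hPS hP]
  rw [show S*P - (P + v*S)*(S - v*T) = v*(T*P - S*(S - v*T)) from by ring]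
  field_simp

lemma deriv_identity (hN : 1 ≤ N) {v : ℝ} (hv : 0 < v)
    (hTP : 0 < Tf l v * Pf l v - Sf l v * Rf l v) :
    -((Sf l v/(N:ℝ) - Rf l v/Pf l v) * (-((Tf l v * Pf l v - Sf l v * Rf l v)/(Pf l v)^2))⁻¹)
      = (phi0 l v + 1/v)⁻¹ := by
  have hNpos : (0:ℝ) < (N:ℝ) := by exact_mod_cast Nat.pos_of_ne_zero (by omega)
  have hP := Pf_pos hl hN hv.le
  have hS : 0 ≤ Sf l v := Sf_nonneg hl (v := v) hv.le
  have hId := card_identity hl (v := v) hv.le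
  have hR := Rf_identity hl (v := v) hv.le
  rw [hR] at hTP
  rw [phi0, hId, hR]
  have h1 : Pf l v + v * Sf l v ≠ 0 := by positivity
  exact abstract_identity _ _ _ _ (ne_of_gt hP) (ne_of_gt hv) h1 (ne_of_gt hTP)

lemma Gf_eq_rhs (hN : 1 ≤ N) {v : ℝ} (hv : 0 < v) :
    Real.log ((1/(N:ℝ)) * (v * Pf l v)) + (1/(N:ℝ)) * ∑ i, Real.log (1/v + l i)
      = Gf l v := by
  have hNpos : (0:ℝ) < (N:ℝ) := by exact_mod_cast Nat.pos_of_ne_zero (by omega)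
  have hP := Pf_pos hl hN hv.le
  have h1 : (1/(N:ℝ)) * (v * Pf l v) = v * ((1/(N:ℝ)) * Pf l v) := by ring
  have h2 : Real.log ((1/(N:ℝ)) * (v * Pf l v))
      = Real.log v + Real.log ((1/(N:ℝ)) * Pf l v) := by
    rw [h1, Real.log_mul (ne_of_gt hv) (by positivity)]
  have h3 : ∀ i : Fin N, Real.log (1/v + l i) = Real.log (l i * v + 1) - Real.log v := by
    intro i
    have hd := den_pos hl hv.le i
    have : 1/v + l i = (l i * v + 1)/v := by field_simp; ring
    rw [this, Real.log_div (ne_of_gt hd) (ne_of_gt hv)]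
  rw [h2, Finset.sum_congr rfl (fun i _ => h3 i), Finset.sum_sub_distrib, Finset.sum_const,
    Gf]
  simp only [Finset.card_univ, Fintype.card_fin, nsmul_eq_mul]
  field_simp
  simp only [mul_comm v]
  ring

lemma Gf_zero (hN : 1 ≤ N) : Gf l 0 = 0 := by
  have hNpos : (0:ℝ) < (N:ℝ) := by exact_mod_cast Nat.pos_of_ne_zero (by omega)
  rw [Gf, Pf]
  simp only [mul_zero, zero_add, inv_one, Real.log_one, Finset.sum_const, Finset.card_univ,
    Fintype.card_fin, nsmul_eq_mul, mul_one, smul_eq_mul]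
  rw [mul_comm, mul_one_div, div_self (ne_of_gt hNpos), Real.log_one]
  ring

lemma contAt_Gf_zero (hN : 1 ≤ N) : ContinuousAt (Gf l) 0 :=
  (hasDerivAt_Gf hl hN le_rfl).continuousAt

end lemmas

/-- computational core of Appendix A's proof of Theorem 3: with
`Ω(s) = (1/N)·Tr[(M + s·I)⁻¹]` and `φ(v) = 1/Ω(1/v) − 1/v` (strictly decreasing, with
limit `Tr(M)/N` as `v → 0⁺`, when `M` has at least two distinct eigenvalues), and `φ⁻¹`
a left inverse of `φ` on `(0,∞)`, for every `v* > 0`, with `ρ* = φ(v*)` and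
`snr₀ = Tr(M)/N`, the improper integral `∫_{ρ*}^{snr₀} (ρ + 1/φ⁻¹(ρ))⁻¹ dρ` converges
and equals `log Ω(1/v*) + (1/N)·log det((1/v*)·I + M)`. -/
theorem stmt_14 {N : ℕ} (hN : 1 ≤ N) (M : Matrix (Fin N) (Fin N) ℂ)
    (hM : M.PosSemidef)
    (heig : ∃ i j, hM.1.eigenvalues i ≠ hM.1.eigenvalues j)
    (Ω φ : ℝ → ℝ)
    (hΩ : ∀ s : ℝ, 0 < s →
      Ω s = (1 / (N : ℝ)) * (((M + (s : ℂ) • (1 : Matrix (Fin N) (Fin N) ℂ))⁻¹).trace).re)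
    (hφ : ∀ v : ℝ, 0 < v → φ v = 1 / Ω (1 / v) - 1 / v)
    (φinv : ℝ → ℝ)
    (hφinv : ∀ v : ℝ, 0 < v → φinv (φ v) = v)
    (vs : ℝ) (hvs : 0 < vs) :
    StrictAntiOn φ (Set.Ioi 0) ∧
    Tendsto φ (nhdsWithin 0 (Set.Ioi 0)) (nhds ((M.trace).re / (N : ℝ))) ∧
    IntervalIntegrable (fun ρ : ℝ => (ρ + 1 / φinv ρ)⁻¹) volume
      (φ vs) ((M.trace).re / (N : ℝ)) ∧
    ∫ ρ in (φ vs)..((M.trace).re / (N : ℝ)), (ρ + 1 / φinv ρ)⁻¹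
      = Real.log (Ω (1 / vs))
        + (1 / (N : ℝ)) *
          Real.log (((((1 / vs : ℝ) : ℂ) • (1 : Matrix (Fin N) (Fin N) ℂ) + M).det).re) := by
  classical
  obtain ⟨l, hldef⟩ : ∃ l, hM.1.eigenvalues = l := ⟨_, rfl⟩
  obtain ⟨i0, j0, hne⟩ := heig
  rw [hldef] at hne
  have hl : ∀ i, 0 ≤ l i := by rw [← hldef]; exact fun i => hM.eigenvalues_nonneg i
  have hNpos : (0:ℝ) < (N:ℝ) := by exact_mod_cast Nat.pos_of_ne_zero (by omega)
  have htr : (M.trace).re / (N : ℝ) = (∑ i, l i) / (N:ℝ) := by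
    rw [trace_re_eq M hM, hldef]
  set snr0 : ℝ := (∑ i, l i) / (N:ℝ) with hsnr0def
  -- Ω in terms of Pf
  have hΩP : ∀ v : ℝ, 0 < v → Ω (1/v) = (1/(N:ℝ)) * (v * Pf l v) := by
    intro v hv
    rw [hΩ (1/v) (by positivity), trace_inv_re M hM (by positivity), hldef]
    congr 1
    rw [Pf, Finset.mul_sum]
    apply Finset.sum_congr rfl
    intro i _
    have h2 := ne_of_gt (den_pos hl hv.le i)
    have h1 : l i + 1/v = (l i * v + 1)/v := by field_simp
    rw [h1, inv_div, div_eq_mul_inv]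
  -- φ = phi0 on positives
  have hφ0 : ∀ v : ℝ, 0 < v → φ v = phi0 l v := by
    intro v hv
    rw [hφ v hv, hΩP v hv, phi0_eq_of_pos hl hN hv]
  have hstrict : StrictAntiOn (phi0 l) (Set.Ici 0) := strictAntiOn_phi0 hl hN hne
  -- Part 1
  have part1 : StrictAntiOn φ (Set.Ioi 0) := by
    intro a ha b hb hab
    rw [hφ0 a ha, hφ0 b hb]
    exact hstrict (Set.mem_Ici.mpr (le_of_lt ha)) (Set.mem_Ici.mpr (le_of_lt hb)) hab
  -- Part 2
  have hphi00 : phi0 l 0 = snr0 := by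
    rw [phi0, Sf, Pf]; simp [hsnr0def]
  have htend0 : Tendsto (phi0 l) (nhdsWithin 0 (Set.Ioi 0)) (nhds snr0) := by
    have hc : ContinuousWithinAt (phi0 l) (Set.Ici 0) 0 :=
      contOn_phi0 hl hN 0 Set.self_mem_Ici
    have := hc.mono (Set.Ioi_subset_Ici le_rfl)
    rw [ContinuousWithinAt, hphi00] at this
    exact this
  have part2 : Tendsto φ (nhdsWithin 0 (Set.Ioi 0)) (nhds ((M.trace).re / (N : ℝ))) := by
    rw [htr]
    apply htend0.congr'
    filter_upwards [eventually_mem_nhdsWithin] with v hv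
    exact (hφ0 v hv).symm
  -- setup
  have h2vs : (0:ℝ) < 2*vs := by linarith
  have hvslt : vs < 2*vs := by linarith
  have hρs_pos : 0 < phi0 l vs := phi0_pos hl hN hne hvs.le
  have hρs_lt : phi0 l vs < snr0 := by
    rw [← hphi00]
    exact hstrict Set.self_mem_Ici (Set.mem_Ici.mpr hvs.le) hvs
  have h2vs_lt_ρs : phi0 l (2*vs) < phi0 l vs :=
    hstrict (Set.mem_Ici.mpr hvs.le) (Set.mem_Ici.mpr h2vs.le) hvslt
  have h2vs_lt_snr : phi0 l (2*vs) < snr0 := by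
    rw [← hphi00]
    exact hstrict Set.self_mem_Ici (Set.mem_Ici.mpr h2vs.le) h2vs
  set K : Set ℝ := Set.Ioo (phi0 l (2*vs)) snr0 with hKdef
  have hKopen : IsOpen K := isOpen_Ioo
  -- surjectivity
  have hsurj : ∀ ρ ∈ K, φinv ρ ∈ Set.Ioo (0:ℝ) (2*vs) ∧ phi0 l (φinv ρ) = ρ := by
    intro ρ hρ
    have hev1 : ∀ᶠ t in nhdsWithin 0 (Set.Ioi 0), ρ < phi0 l t :=
      htend0.eventually (eventually_gt_nhds hρ.2)
    have hev2 : ∀ᶠ t in nhdsWithin 0 (Set.Ioi 0), t ∈ Set.Ioo (0:ℝ) (2*vs) :=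
      eventually_of_mem (Ioo_mem_nhdsGT h2vs) (fun x hx => hx)
    obtain ⟨t, ht1, ht2⟩ := (hev1.and hev2).exists
    have hIVT : Set.Ioo (phi0 l (2*vs)) (phi0 l t) ⊆ phi0 l '' Set.Ioo t (2*vs) := by
      apply intermediate_value_Ioo' (le_of_lt ht2.2)
      apply (contOn_phi0 hl hN).mono
      intro x hx
      exact Set.mem_Ici.mpr (le_trans ht2.1.le hx.1)
    obtain ⟨v, hv, hveq⟩ := hIVT ⟨hρ.1, ht1⟩
    have hv0 : 0 < v := lt_trans ht2.1 hv.1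
    have hinv : φinv ρ = v := by rw [← hveq, ← hφ0 v hv0, hφinv v hv0]
    rw [hinv]
    exact ⟨⟨hv0, hv.2⟩, hveq⟩
  -- comparison
  have hcomp_lt : ∀ ρ ∈ K, ∀ c : ℝ, 0 < c → phi0 l c < ρ → φinv ρ < c := by
    intro ρ hρ c hc h
    obtain ⟨hvmem, heq⟩ := hsurj ρ hρ
    by_contra hle
    push_neg at hle
    rcases eq_or_lt_of_le hle with he | hlt'
    · rw [← he] at heq; linarith
    · have := hstrict (Set.mem_Ici.mpr hc.le) (Set.mem_Ici.mpr hvmem.1.le) hlt'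
      rw [heq] at this; linarith
  have hcomp_gt : ∀ ρ ∈ K, ∀ b : ℝ, 0 < b → ρ < phi0 l b → b < φinv ρ := by
    intro ρ hρ b hb h
    obtain ⟨hvmem, heq⟩ := hsurj ρ hρ
    by_contra hle
    push_neg at hle
    rcases eq_or_lt_of_le hle with he | hlt'
    · rw [he] at heq; linarith
    · have := hstrict (Set.mem_Ici.mpr hvmem.1.le) (Set.mem_Ici.mpr hb.le) hlt'
      rw [heq] at this; linarith
  -- continuity of φinv on K
  have hcont : ∀ ρ ∈ K, ContinuousAt φinv ρ := by
    intro ρ hρ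
    obtain ⟨hvmem, heq⟩ := hsurj ρ hρ
    rw [ContinuousAt]
    apply tendsto_order.2
    constructor
    · intro b hb
      rcases le_or_gt b 0 with hb0 | hb0
      · filter_upwards [hKopen.mem_nhds hρ] with x hx
        exact lt_of_le_of_lt hb0 (hsurj x hx).1.1
      · have hbmem : phi0 l (φinv ρ) < phi0 l b :=
          hstrict (Set.mem_Ici.mpr hb0.le) (Set.mem_Ici.mpr hvmem.1.le) hb
        rw [heq] at hbmem
        filter_upwards [hKopen.mem_nhds hρ, Iio_mem_nhds hbmem] with x hx1 hx2
        exact hcomp_gt x hx1 b hb0 hx2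
    · intro c hc
      have hc0 : 0 < c := lt_trans hvmem.1 hc
      have hcmem : phi0 l c < ρ := by
        have := hstrict (Set.mem_Ici.mpr hvmem.1.le) (Set.mem_Ici.mpr hc0.le) hc
        rw [heq] at this; exact this
      filter_upwards [hKopen.mem_nhds hρ, Ioi_mem_nhds hcmem] with x hx1 hx2
      exact hcomp_lt x hx1 c hc0 hx2
  -- derivative of the antiderivative
  have hfd : ∀ ρ ∈ K, HasDerivAt (fun x => -(Gf l (φinv x))) ((ρ + 1/φinv ρ)⁻¹) ρ := by
    intro ρ hρ
    obtain ⟨hvmem, heq⟩ := hsurj ρ hρ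
    have hv0 : 0 < φinv ρ := hvmem.1
    have hTP := TP_SR_pos hl hv0.le hne
    have hP := Pf_pos hl hN hv0.le
    have hd0 := hasDerivAt_phi0 hl hN hv0.le
    have hne0 : -((Tf l (φinv ρ) * Pf l (φinv ρ) - Sf l (φinv ρ) * Rf l (φinv ρ))
        / (Pf l (φinv ρ))^2) ≠ 0 := by
      have hpos : 0 < (Tf l (φinv ρ) * Pf l (φinv ρ) - Sf l (φinv ρ) * Rf l (φinv ρ))
          / (Pf l (φinv ρ))^2 := div_pos hTP (by positivity)
      exact ne_of_lt (neg_lt_zero.mpr hpos)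
    have hfg : ∀ᶠ y in nhds ρ, phi0 l (φinv y) = y := by
      filter_upwards [hKopen.mem_nhds hρ] with x hx
      exact (hsurj x hx).2
    have hinv : HasDerivAt φinv
        (-((Tf l (φinv ρ) * Pf l (φinv ρ) - Sf l (φinv ρ) * Rf l (φinv ρ))
          / (Pf l (φinv ρ))^2))⁻¹ ρ :=
      HasDerivAt.of_local_left_inverse (hcont ρ hρ) hd0 hne0 hfg
    have hG := hasDerivAt_Gf hl hN hv0.le
    have hcomp := (hG.comp ρ hinv).neg
    have hval := deriv_identity hl hN hv0 hTP
    rw [heq] at hval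
    rw [← hval]
    exact hcomp
  have hρsK : phi0 l vs ∈ K := ⟨h2vs_lt_ρs, hρs_lt⟩
  have hIccK : ∀ c ∈ Set.Ico (phi0 l vs) snr0, Set.Icc (phi0 l vs) c ⊆ K := by
    intro c hc x hx
    exact ⟨lt_of_lt_of_le h2vs_lt_ρs hx.1, lt_of_le_of_lt hx.2 hc.2⟩
  -- continuity of the integrand on K
  have hfcont : ∀ ρ ∈ K, ContinuousAt (fun x => (x + 1/φinv x)⁻¹) ρ := by
    intro ρ hρ
    obtain ⟨hvmem, heq⟩ := hsurj ρ hρ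
    have hρpos : 0 < ρ := lt_trans (phi0_pos hl hN hne h2vs.le) hρ.1
    have h1 : ContinuousAt (fun x => x + 1/φinv x) ρ :=
      continuousAt_id.add (continuousAt_const.div (hcont ρ hρ) (ne_of_gt hvmem.1))
    apply h1.inv₀
    have : 0 < ρ + 1/φinv ρ := by
      have h2 : 0 < 1/φinv ρ := one_div_pos.mpr hvmem.1
      linarith
    exact ne_of_gt this
  -- FTC on compact subintervals
  have hFTC : ∀ c ∈ Set.Ico (phi0 l vs) snr0,
      ∫ x in (phi0 l vs)..c, (x + 1/φinv x)⁻¹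
        = -(Gf l (φinv c)) - -(Gf l (φinv (phi0 l vs))) := by
    intro c hc
    apply intervalIntegral.integral_eq_sub_of_hasDerivAt
    · intro x hx
      rw [Set.uIcc_of_le hc.1] at hx
      exact hfd x (hIccK c hc hx)
    · apply ContinuousOn.intervalIntegrable
      intro x hx
      rw [Set.uIcc_of_le hc.1] at hx
      exact (hfcont x (hIccK c hc hx)).continuousWithinAt
  have hφinvρs : φinv (phi0 l vs) = vs := by rw [← hφ0 vs hvs]; exact hφinv vs hvs
  -- global integrability
  have hII : IntervalIntegrable (fun x : ℝ => (x + 1/φinv x)⁻¹) volume (phi0 l vs) snr0 := by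
    rw [intervalIntegrable_iff_integrableOn_Ioo_of_le hρs_lt.le]
    refine ⟨ContinuousOn.aestronglyMeasurable ?_ measurableSet_Ioo,
      MeasureTheory.HasFiniteIntegral.restrict_of_bounded (C := (phi0 l vs)⁻¹)
        measure_Ioo_lt_top ?_⟩
    · intro x hx
      have hxK : x ∈ K := ⟨lt_trans h2vs_lt_ρs hx.1, hx.2⟩
      exact (hfcont x hxK).continuousWithinAt
    · rw [ae_restrict_iff' measurableSet_Ioo]
      apply ae_of_all
      intro x hx
      have hxK : x ∈ K := ⟨lt_trans h2vs_lt_ρs hx.1, hx.2⟩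
      obtain ⟨hvmem, heq⟩ := hsurj x hxK
      have h1 : 0 < 1/φinv x := one_div_pos.mpr hvmem.1
      have h2 : phi0 l vs < x + 1/φinv x := by have := hx.1; linarith
      rw [Real.norm_eq_abs, abs_of_pos (inv_pos.mpr (lt_trans hρs_pos h2))]
      exact inv_anti₀ hρs_pos h2.le
  -- limit of φinv at snr0⁻
  have htendinv : Tendsto φinv (nhdsWithin snr0 (Set.Iio snr0)) (nhds 0) := by
    apply tendsto_order.2
    constructor
    · intro b hb
      filter_upwards [Ioo_mem_nhdsLT h2vs_lt_snr] with x hx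
      exact lt_trans hb ((hsurj x hx).1.1)
    · intro c hc
      have hc'0 : 0 < min c vs := lt_min hc hvs
      have hp1 : phi0 l (min c vs) < snr0 := by
        rw [← hphi00]
        exact hstrict Set.self_mem_Ici (Set.mem_Ici.mpr hc'0.le) hc'0
      filter_upwards [Ioo_mem_nhdsLT
        (show max (phi0 l (min c vs)) (phi0 l (2*vs)) < snr0 from max_lt hp1 h2vs_lt_snr)]
        with x hx
      have hxK : x ∈ K := ⟨lt_of_le_of_lt (le_max_right _ _) hx.1, hx.2⟩
      have hxgt : phi0 l (min c vs) < x := lt_of_le_of_lt (le_max_left _ _) hx.1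
      exact lt_of_lt_of_le (hcomp_lt x hxK (min c vs) hc'0 hxgt) (min_le_left _ _)
  -- two limits along 𝓝[Ioo ρ* snr0] snr0
  have hnebot : (nhdsWithin snr0 (Set.Ioo (phi0 l vs) snr0)).NeBot :=
    right_nhdsWithin_Ioo_neBot hρs_lt
  have hlim1 : Tendsto (fun c => ∫ x in (phi0 l vs)..c, (x + 1/φinv x)⁻¹)
      (nhdsWithin snr0 (Set.Ioo (phi0 l vs) snr0))
      (nhds (∫ x in (phi0 l vs)..snr0, (x + 1/φinv x)⁻¹)) := by
    have hconts := intervalIntegral.continuousOn_primitive_interval'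
      hII (Set.left_mem_uIcc)
    have h1 := hconts snr0 (Set.right_mem_uIcc)
    rw [ContinuousWithinAt] at h1
    apply h1.mono_left
    apply nhdsWithin_mono
    rw [Set.uIcc_of_le hρs_lt.le]
    exact Set.Ioo_subset_Icc_self
  have hlim2 : Tendsto (fun c => -(Gf l (φinv c)) - -(Gf l (φinv (phi0 l vs))))
      (nhdsWithin snr0 (Set.Ioo (phi0 l vs) snr0))
      (nhds (0 - -(Gf l (φinv (phi0 l vs))))) := by
    have h1 : Tendsto φinv (nhdsWithin snr0 (Set.Ioo (phi0 l vs) snr0)) (nhds 0) :=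
      htendinv.mono_left (nhdsWithin_mono _ (fun x hx => hx.2))
    have h2 : Tendsto (fun c => Gf l (φinv c))
        (nhdsWithin snr0 (Set.Ioo (phi0 l vs) snr0)) (nhds (Gf l 0)) :=
      (contAt_Gf_zero hl hN).tendsto.comp h1
    rw [Gf_zero hl hN] at h2
    have h3 := h2.neg
    rw [neg_zero] at h3
    have h4 := h3.sub_const (-(Gf l (φinv (phi0 l vs))))
    rw [show (0:ℝ) - -(Gf l (φinv (phi0 l vs))) = 0 - -(Gf l (φinv (phi0 l vs))) from rfl]
    exact h4
  have heeq : ∀ᶠ c in nhdsWithin snr0 (Set.Ioo (phi0 l vs) snr0),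
      ∫ x in (phi0 l vs)..c, (x + 1/φinv x)⁻¹
        = -(Gf l (φinv c)) - -(Gf l (φinv (phi0 l vs))) := by
    filter_upwards [eventually_mem_nhdsWithin] with c hc
    exact hFTC c ⟨hc.1.le, hc.2⟩
  have hval : ∫ x in (phi0 l vs)..snr0, (x + 1/φinv x)⁻¹
      = 0 - -(Gf l (φinv (phi0 l vs))) :=
    tendsto_nhds_unique (hlim1.congr' heeq) hlim2
  -- assemble
  refine ⟨part1, part2, ?_, ?_⟩
  · rw [hφ0 vs hvs, htr]
    exact hII
  · rw [hφ0 vs hvs, htr]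
    rw [hval, hφinvρs, zero_sub, neg_neg]
    rw [hΩP vs hvs]
    have hdet := det_shift_re M hM (1/vs)
    rw [hldef] at hdet
    rw [hdet]
    rw [Real.log_prod (fun i _ => ne_of_gt (by have := hl i; positivity : (0:ℝ) < 1/vs + l i))]
    exact (Gf_eq_rhs hl hN hvs).symm
end
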